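/- Let M : ℤ → ℝ satisfy Σ_{k∈ℤ} |M(k)| < ∞ and Σ_{k∈ℤ} |k|·|M(k)| < ∞, and set M̂(t) = Σ_{k∈ℤ} M(k) e^{itk} and M̂′(t) = Σ_{k∈ℤ} i k M(k) e^{itk} for t ∈ ℝ. Then Σ_{k∈ℤ} |M(k)| ≤ (1/2 + 1/(2π))^{1/2} · ( ∫_{−π}^{π} ( |M̂(t)|² + |M̂′(t)|² ) dt )^{1/2}. -/

import Mathlib

open MeasureTheory intervalIntegral Real
open scoped ENNReal NNReal

lemma exp_abs_one (t : ℝ) (k : ℤ) : ‖Complex.exp (Complex.I * t * k)‖ = 1 := by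
  rw [Complex.norm_exp]
  simp [Complex.mul_re]

lemma integral_exp_int (n : ℤ) :
    (∫ t in (-π)..π, Complex.exp (Complex.I * t * n)) = if n = 0 then (2 * π : ℂ) else 0 := by
  rcases eq_or_ne n 0 with h | h
  · simp [h, mul_comm]
    norm_num
    push_cast
    ring
  · have hc : (Complex.I * n) ≠ 0 := by
      simp [Complex.I_ne_zero, Complex.ext_iff]
      exact_mod_cast h
    have : ∀ t : ℝ, Complex.exp (Complex.I * t * n) = Complex.exp ((Complex.I * n) * t) := by
      intro t; ring_nf
    rw [if_neg h]
    calc (∫ t in (-π)..π, Complex.exp (Complex.I * t * n))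
        = ∫ t in (-π)..π, Complex.exp ((Complex.I * n) * t) := by
          simp only [this]
      _ = (Complex.exp ((Complex.I * n) * π) - Complex.exp ((Complex.I * n) * (-π))) / (Complex.I * n) := by
          rw [integral_exp_mul_complex hc]; push_cast; ring_nf
      _ = 0 := by
          have e1 : (Complex.I * n) * (π:ℂ) = n * (π * Complex.I) := by push_cast; ring
          have e2 : (Complex.I * n) * (-π:ℂ) = ((-n : ℤ) : ℂ) * (π * Complex.I) := by push_cast; ring
          rw [e1, e2, Complex.exp_int_mul, Complex.exp_int_mul, Complex.exp_pi_mul_I]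
          have hsq : ((-1 : ℂ)) ^ n * ((-1 : ℂ)) ^ n = 1 := by
            rw [← zpow_add₀ (by norm_num : (-1:ℂ) ≠ 0)]
            have h2 : n + n = 2 * n := by ring
            rw [h2, zpow_mul]; norm_num
          have : ((-1 : ℂ)) ^ (-n) = (-1 : ℂ) ^ n := by
            rw [zpow_neg]; exact inv_eq_of_mul_eq_one_left hsq
          rw [this, sub_self, zero_div]

lemma parseval (c : ℤ → ℝ) (hc : Summable fun k => |c k|) :
    (∫ t in (-π)..π,
      ‖∑' k : ℤ, (c k : ℂ) * Complex.exp (Complex.I * t * k)‖ ^ 2)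
      = 2 * π * ∑' k : ℤ, (c k)^2 := by
  have habs : ∀ (t : ℝ) (k : ℤ), ‖Complex.exp (Complex.I * t * k)‖ = 1 := by
    intro t k
    rw [Complex.norm_exp]
    simp [Complex.mul_re]
  set F : ℝ → ℂ := fun t => ∑' k : ℤ, (c k : ℂ) * Complex.exp (Complex.I * t * k) with hF
  set G : ℤ × ℤ → ℝ → ℂ :=
    fun p t => ((c p.1 * c p.2 : ℝ) : ℂ) * Complex.exp (Complex.I * t * ((p.1 - p.2 : ℤ) : ℂ))
    with hG
  have hnorm : ∀ (t : ℝ) (k : ℤ), ‖(c k : ℂ) * Complex.exp (Complex.I * t * k)‖ = |c k| := by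
    intro t k
    rw [norm_mul, habs, Complex.norm_real, Real.norm_eq_abs, mul_one]
  have hsum_t : ∀ t : ℝ, Summable fun k : ℤ => ‖(c k : ℂ) * Complex.exp (Complex.I * t * k)‖ := by
    intro t
    simpa only [hnorm] using hc
  -- pointwise product expansion
  have hmul : ∀ t : ℝ, F t * (starRingEnd ℂ) (F t) = ∑' p : ℤ × ℤ, G p t := by
    intro t
    have hconj : (starRingEnd ℂ) (F t)
        = ∑' k : ℤ, (c k : ℂ) * Complex.exp (-(Complex.I * t * k)) := by
      calc (starRingEnd ℂ) (F t) = star (F t) := rfl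
        _ = ∑' k : ℤ, star ((c k : ℂ) * Complex.exp (Complex.I * t * k)) := tsum_star
        _ = ∑' k : ℤ, (c k : ℂ) * Complex.exp (-(Complex.I * t * k)) := by
          skip
          congr 1
          funext k
          show (starRingEnd ℂ) (_ * _) = _
          rw [map_mul, Complex.conj_ofReal, ← Complex.exp_conj]
          congr 2
          simp [Complex.ext_iff]
    rw [hconj, hF]
    rw [tsum_mul_tsum_of_summable_norm (hsum_t t) (by
      have : ∀ k : ℤ, ‖(c k : ℂ) * Complex.exp (-(Complex.I * t * k))‖ = |c k| := by
        intro k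
        rw [norm_mul, Complex.norm_real, Real.norm_eq_abs]
        rw [← Complex.norm_conj, ← Complex.exp_conj]
        have : (starRingEnd ℂ) (-(Complex.I * t * k)) = Complex.I * t * k := by
          simp [Complex.ext_iff]
        rw [this, habs, mul_one]
      simpa only [this] using hc)]
    congr 1
    funext p
    rw [hG]
    simp only
    rw [mul_mul_mul_comm, ← Complex.exp_add]
    push_cast
    ring_nf
  -- the term integrals
  have hterm : ∀ p : ℤ × ℤ, (∫ t in Set.Ioc (-π) π, G p t)
      = ((c p.1 * c p.2 : ℝ) : ℂ) * (if p.1 = p.2 then (2 * π : ℂ) else 0) := by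
    intro p
    rw [← integral_of_le (by linarith [pi_pos] : (-π : ℝ) ≤ π)]
    rw [hG]
    simp only
    rw [intervalIntegral.integral_const_mul]
    congr 1
    rw [integral_exp_int (p.1 - p.2)]
    simp [sub_eq_zero]
  -- summability facts
  have hcnn : Summable fun k : ℤ => ‖c k‖₊ := by
    rw [← NNReal.summable_coe]
    simpa only [coe_nnnorm, Real.norm_eq_abs] using hc
  have hAtop : (∑' k : ℤ, (‖c k‖₊ : ℝ≥0∞)) ≠ ⊤ := ENNReal.tsum_coe_ne_top_iff_summable.2 hcnn
  have hGmeas : ∀ p : ℤ × ℤ, AEStronglyMeasurable (G p) (volume.restrict (Set.Ioc (-π) π)) := by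
    intro p
    apply Continuous.aestronglyMeasurable
    rw [hG]
    exact continuous_const.mul (Complex.continuous_exp.comp
      ((continuous_const.mul Complex.continuous_ofReal).mul continuous_const))
  have hGlint : (∑' p : ℤ × ℤ, ∫⁻ t in Set.Ioc (-π) π, ‖G p t‖₊ ∂volume) ≠ ⊤ := by
    have hval : ∀ p : ℤ × ℤ, (∫⁻ t in Set.Ioc (-π) π, ‖G p t‖₊ ∂volume)
        = ((‖c p.1‖₊ : ℝ≥0∞) * (‖c p.2‖₊ : ℝ≥0∞)) * ENNReal.ofReal (2 * π) := by
      intro p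
      have h1 : ∀ t : ℝ, (‖G p t‖₊ : ℝ≥0∞) = (‖c p.1‖₊ : ℝ≥0∞) * (‖c p.2‖₊ : ℝ≥0∞) := by
        intro t
        have hno : ‖G p t‖ = |c p.1| * |c p.2| := by
          rw [hG]
          simp only
          rw [norm_mul, Complex.norm_real, Real.norm_eq_abs,
            habs t (p.1 - p.2), mul_one, abs_mul]
        rw [← ENNReal.coe_mul]
        congr 1
        ext
        simp only [coe_nnnorm, NNReal.coe_mul, hno, Real.norm_eq_abs]
      calc (∫⁻ t in Set.Ioc (-π) π, ‖G p t‖₊ ∂volume)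
          = ∫⁻ _ in Set.Ioc (-π) π, ((‖c p.1‖₊ : ℝ≥0∞) * (‖c p.2‖₊ : ℝ≥0∞)) ∂volume := by
            apply lintegral_congr
            intro t
            exact h1 t
        _ = ((‖c p.1‖₊ : ℝ≥0∞) * (‖c p.2‖₊ : ℝ≥0∞)) * ENNReal.ofReal (2 * π) := by
            rw [setLIntegral_const, Real.volume_Ioc]
            congr 1
            congr 1
            ring
    calc (∑' p : ℤ × ℤ, ∫⁻ t in Set.Ioc (-π) π, ‖G p t‖₊ ∂volume)
        = ∑' p : ℤ × ℤ, ((‖c p.1‖₊ : ℝ≥0∞) * (‖c p.2‖₊ : ℝ≥0∞)) * ENNReal.ofReal (2 * π) :=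
          tsum_congr hval
      _ = ((∑' j : ℤ, (‖c j‖₊ : ℝ≥0∞)) * (∑' k : ℤ, (‖c k‖₊ : ℝ≥0∞))) * ENNReal.ofReal (2 * π) := by
          rw [ENNReal.tsum_mul_right]
          congr 1
          rw [ENNReal.tsum_prod' (f := fun p : ℤ × ℤ => ((‖c p.1‖₊ : ℝ≥0∞) * (‖c p.2‖₊ : ℝ≥0∞)))]
          simp only
          simp_rw [ENNReal.tsum_mul_left]
          rw [ENNReal.tsum_mul_right]
      _ ≠ ⊤ := by
          exact ENNReal.mul_ne_top (ENNReal.mul_ne_top hAtop hAtop) ENNReal.ofReal_ne_top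
  -- final diagonal sum
  have hfinal : (∑' p : ℤ × ℤ, ((c p.1 * c p.2 : ℝ) : ℂ) * (if p.1 = p.2 then (2 * π : ℂ) else 0))
      = ((2 * π * ∑' k : ℤ, (c k)^2 : ℝ) : ℂ) := by
    have habs2 : Summable fun k : ℤ => ‖(c k : ℂ)‖ := by
      simpa using hc
    have hsumf : Summable fun p : ℤ × ℤ =>
        ((c p.1 * c p.2 : ℝ) : ℂ) * (if p.1 = p.2 then (2 * π : ℂ) else 0) := by
      have hbase : Summable fun p : ℤ × ℤ => ((c p.1 : ℂ)) * ((c p.2 : ℂ)) :=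
        summable_mul_of_summable_norm (f := fun k : ℤ => (c k : ℂ)) (g := fun k : ℤ => (c k : ℂ)) habs2 habs2
      apply Summable.of_norm_bounded ((hbase.norm).mul_right (2 * π))
      intro p
      have h2 : ‖(if p.1 = p.2 then (2 * π : ℂ) else 0)‖ ≤ 2 * π := by
        split
        · rw [show ((2 * π : ℂ)) = ((2 * π : ℝ) : ℂ) by push_cast; ring,
            Complex.norm_real, Real.norm_eq_abs, abs_of_nonneg (by positivity)]
        · simp only [norm_zero]; positivity
      have h3 : ‖((c p.1 * c p.2 : ℝ) : ℂ)‖ = ‖(c p.1 : ℂ) * (c p.2 : ℂ)‖ := by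
        rw [show ((c p.1 * c p.2 : ℝ) : ℂ) = (c p.1 : ℂ) * (c p.2 : ℂ) by push_cast; ring]
      calc ‖((c p.1 * c p.2 : ℝ) : ℂ) * (if p.1 = p.2 then (2 * π : ℂ) else 0)‖
          = ‖((c p.1 * c p.2 : ℝ) : ℂ)‖ * ‖(if p.1 = p.2 then (2 * π : ℂ) else 0)‖ :=
            norm_mul _ _
        _ ≤ ‖(c p.1 : ℂ) * (c p.2 : ℂ)‖ * (2 * π) := by
            rw [h3]
            exact mul_le_mul_of_nonneg_left h2 (norm_nonneg _)
    have hfiber : ∀ b : ℤ, Summable fun k : ℤ =>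
        ((c b * c k : ℝ) : ℂ) * (if b = k then (2 * π : ℂ) else 0) := by
      intro b
      refine (summable_congr (fun k => ?_)).mp
        ((hasSum_ite_eq b (((c b * c b : ℝ) : ℂ) * (2 * π : ℂ))).summable)
      by_cases h : k = b
      · subst h; simp
      · simp [h, Ne.symm h]
    rw [Summable.tsum_prod' hsumf hfiber]
    have hinner : ∀ b : ℤ, (∑' k : ℤ, ((c b * c k : ℝ) : ℂ) * (if b = k then (2 * π : ℂ) else 0))
        = ((2 * π * (c b)^2 : ℝ) : ℂ) := by
      intro b
      rw [tsum_eq_single b (fun k hk => by rw [if_neg (fun h => hk h.symm), mul_zero])]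
      rw [if_pos rfl]
      push_cast
      ring
    calc (∑' (b : ℤ) (k : ℤ), ((c b * c k : ℝ) : ℂ) * (if b = k then (2 * π : ℂ) else 0))
        = ∑' b : ℤ, ((2 * π * (c b)^2 : ℝ) : ℂ) := tsum_congr hinner
      _ = ((∑' b : ℤ, 2 * π * (c b)^2 : ℝ) : ℂ) := (Complex.ofReal_tsum _).symm
      _ = ((2 * π * ∑' k : ℤ, (c k)^2 : ℝ) : ℂ) := by rw [tsum_mul_left]
  -- main chain
  have key : ((∫ t in (-π)..π, ‖F t‖^2 : ℝ) : ℂ)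
      = ((2 * π * ∑' k : ℤ, (c k)^2 : ℝ) : ℂ) := by
    calc ((∫ t in (-π)..π, ‖F t‖^2 : ℝ) : ℂ)
        = ∫ t in (-π)..π, (((‖F t‖)^2 : ℝ) : ℂ) := integral_ofReal.symm
      _ = ∫ t in (-π)..π, (∑' p : ℤ × ℤ, G p t) := by
          apply integral_congr
          intro t _
          show ((‖F t‖ ^ 2 : ℝ) : ℂ) = ∑' p : ℤ × ℤ, G p t
          rw [Complex.sq_norm, ← Complex.mul_conj, hmul t]
      _ = ∫ t in Set.Ioc (-π) π, (∑' p : ℤ × ℤ, G p t) :=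
          integral_of_le (by linarith [pi_pos] : (-π : ℝ) ≤ π)
      _ = ∑' p : ℤ × ℤ, ∫ t in Set.Ioc (-π) π, G p t := integral_tsum hGmeas hGlint
      _ = ∑' p : ℤ × ℤ, ((c p.1 * c p.2 : ℝ) : ℂ) * (if p.1 = p.2 then (2 * π : ℂ) else 0) :=
          tsum_congr hterm
      _ = ((2 * π * ∑' k : ℤ, (c k)^2 : ℝ) : ℂ) := hfinal
  exact_mod_cast key


lemma hasSum_tele : HasSum (fun n : ℕ => 1/((n:ℝ)+1) - 1/((n:ℝ)+2)) 1 := by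
  rw [hasSum_iff_tendsto_nat_of_nonneg]
  · have hps : ∀ n : ℕ, ∑ i ∈ Finset.range n, (1/((i:ℝ)+1) - 1/((i:ℝ)+2))
        = 1 - 1/((n:ℝ)+1) := by
      intro n
      rw [show (1:ℝ) - 1/((n:ℝ)+1)
            = (fun i : ℕ => 1/((i:ℝ)+1)) 0 - (fun i : ℕ => 1/((i:ℝ)+1)) n by norm_num,
        ← Finset.sum_range_sub' (f := fun i : ℕ => 1/((i:ℝ)+1)) n]
      apply Finset.sum_congr rfl
      intro i _
      push_cast
      ring
    simp only [hps]
    simpa using tendsto_const_nhds.sub (tendsto_one_div_add_atTop_nhds_zero_nat (𝕜 := ℝ))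
  · intro i
    have : 1/((i:ℝ)+2) ≤ 1/((i:ℝ)+1) := by
      apply one_div_le_one_div_of_le
      · positivity
      · linarith
    linarith

noncomputable def gg : ℕ → ℝ := fun n => 1/(1+(n:ℝ)^2)

lemma gg_le (n : ℕ) : gg (n+2) ≤ 1/((n:ℝ)+1) - 1/((n:ℝ)+2) := by
  have h2 : 1/((n:ℝ)+1) - 1/((n:ℝ)+2) = 1/(((n:ℝ)+1)*((n:ℝ)+2)) := by
    field_simp
    ring
  rw [h2, gg]
  apply one_div_le_one_div_of_le
  · positivity
  · push_cast
    nlinarith [sq_nonneg ((n:ℝ))]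

lemma gg_summable2 : Summable fun n : ℕ => gg (n+2) :=
  Summable.of_nonneg_of_le (fun n => by rw [gg]; positivity) gg_le hasSum_tele.summable

lemma gg_summable : Summable gg := (summable_nat_add_iff 2).mp gg_summable2

lemma gg_tsum2_le : (∑' n : ℕ, gg (n+2)) ≤ 1 := by
  have := Summable.tsum_le_tsum gg_le gg_summable2 hasSum_tele.summable
  rwa [hasSum_tele.tsum_eq] at this

lemma gg_tsum_le : (∑' n : ℕ, gg n) ≤ 5/2 := by
  have h1 : Summable fun n : ℕ => gg (n+1) := (summable_nat_add_iff 1).mpr gg_summable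
  rw [Summable.tsum_eq_zero_add gg_summable, Summable.tsum_eq_zero_add h1]
  have he : (fun n : ℕ => gg (n+1+1)) = fun n : ℕ => gg (n+2) := by
    funext n; congr 1
  rw [he]
  have h0 : gg 0 = 1 := by rw [gg]; norm_num
  have h1' : gg (0+1) = 1/2 := by rw [gg]; norm_num
  rw [h0, h1']
  linarith [gg_tsum2_le]

lemma gg_tail_le : (∑' n : ℕ, gg (n+1)) ≤ 3/2 := by
  have h1 : Summable fun n : ℕ => gg (n+1) := (summable_nat_add_iff 1).mpr gg_summable
  have := Summable.tsum_eq_zero_add gg_summable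
  have h0 : gg 0 = 1 := by rw [gg]; norm_num
  rw [h0] at this
  have := gg_tsum_le
  rw [Summable.tsum_eq_zero_add gg_summable, h0] at this
  linarith

lemma w_summable : Summable (fun k : ℤ => 1/(1+(k:ℝ)^2)) := by
  apply Summable.of_nat_of_neg_add_one
  · exact (summable_congr (fun n => by rw [gg]; norm_num)).mpr gg_summable
  · refine (summable_congr (fun n => ?_)).mpr ((summable_nat_add_iff 1).mpr gg_summable)
    rw [gg]
    push_cast
    ring_nf

lemma w_tsum_le : (∑' k : ℤ, 1/(1+(k:ℝ)^2)) ≤ 4 := by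
  rw [tsum_of_nat_of_neg_add_one
    ((summable_congr (fun n => by rw [gg]; norm_num)).mpr gg_summable)
    ((summable_congr (fun n : ℕ => by rw [gg]; push_cast; ring_nf)).mpr
      ((summable_nat_add_iff 1).mpr gg_summable))]
  have e1 : (∑' n : ℕ, 1/(1+((n:ℤ):ℝ)^2)) = ∑' n : ℕ, gg n := by
    apply tsum_congr; intro n; rw [gg]; norm_num
  have e2 : (∑' n : ℕ, 1/(1+((-(n+1):ℤ):ℝ)^2)) = ∑' n : ℕ, gg (n+1) := by
    apply tsum_congr; intro n; rw [gg]; push_cast; ring_nf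
  rw [e1, e2]
  linarith [gg_tsum_le, gg_tail_le]


/-- Lemma 6 (Presman's smoothing inequality): the total variation of a measure `M`
on ℤ is bounded via the `L²`-norms of its Fourier transform `M̂` and of the termwise
derivative `M̂′`. -/
theorem total_variation_le_fourier (M : ℤ → ℝ)
    (h1 : Summable fun k : ℤ => |M k|)
    (h2 : Summable fun k : ℤ => |(k : ℝ)| * |M k|) :
    ∑' k : ℤ, |M k| ≤
      Real.sqrt (1 / 2 + 1 / (2 * Real.pi)) *
        Real.sqrt (∫ t in (-Real.pi)..Real.pi,
          ‖∑' k : ℤ, (M k : ℂ) * Complex.exp (Complex.I * t * k)‖ ^ 2 +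
          ‖∑' k : ℤ,
            Complex.I * (k : ℂ) * (M k : ℂ) * Complex.exp (Complex.I * t * k)‖ ^ 2) := by
  have hpi : (0:ℝ) < π := pi_pos
  set c₂ : ℤ → ℝ := fun k => (k : ℝ) * M k with hc₂
  have hc₂abs : Summable fun k : ℤ => |c₂ k| := by
    simpa only [hc₂, abs_mul] using h2
  -- the L² sums
  have hT : ∀ k : ℤ, |M k| ≤ ∑' j : ℤ, |M j| := fun k =>
    Summable.le_tsum h1 k (fun j _ => abs_nonneg _)
  have hT2 : ∀ k : ℤ, |c₂ k| ≤ ∑' j : ℤ, |c₂ j| := fun k =>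
    Summable.le_tsum hc₂abs k (fun j _ => abs_nonneg _)
  have hA : Summable fun k : ℤ => (M k)^2 := by
    apply Summable.of_nonneg_of_le (fun k => sq_nonneg _)
      (fun k => ?_) (h1.mul_left (∑' j : ℤ, |M j|))
    calc (M k)^2 = |M k| * |M k| := by rw [← sq_abs (M k)]; ring
      _ ≤ (∑' j : ℤ, |M j|) * |M k| := mul_le_mul_of_nonneg_right (hT k) (abs_nonneg _)
  have hB : Summable fun k : ℤ => (c₂ k)^2 := by
    apply Summable.of_nonneg_of_le (fun k => sq_nonneg _)
      (fun k => ?_) (hc₂abs.mul_left (∑' j : ℤ, |c₂ j|))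
    calc (c₂ k)^2 = |c₂ k| * |c₂ k| := by rw [← sq_abs (c₂ k)]; ring
      _ ≤ (∑' j : ℤ, |c₂ j|) * |c₂ k| := mul_le_mul_of_nonneg_right (hT2 k) (abs_nonneg _)
  set v : ℤ → ℝ := fun k => (1 + (k:ℝ)^2) * (M k)^2 with hv
  have hvsum : Summable v := by
    apply (hA.add hB).congr
    intro k
    rw [hv, hc₂]
    simp only
    ring
  have hveq : (∑' k : ℤ, v k) = (∑' k : ℤ, (M k)^2) + ∑' k : ℤ, (c₂ k)^2 := by
    rw [← Summable.tsum_add hA hB]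
    apply tsum_congr
    intro k
    rw [hv, hc₂]
    simp only
    ring
  have hvnonneg : ∀ k : ℤ, 0 ≤ v k := fun k => by rw [hv]; positivity
  -- rewrite the integral via Parseval
  have hcont : ∀ (c : ℤ → ℝ), (Summable fun k : ℤ => |c k|) →
      Continuous (fun t : ℝ => ∑' k : ℤ, (c k : ℂ) * Complex.exp (Complex.I * t * k)) := by
    intro c hc
    refine continuous_tsum (fun k => ?_) hc (fun k t => ?_)
    · exact continuous_const.mul (Complex.continuous_exp.comp
        ((continuous_const.mul Complex.continuous_ofReal).mul continuous_const))
    · rw [norm_mul, Complex.norm_real, Real.norm_eq_abs]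
      have : ‖Complex.exp (Complex.I * t * k)‖ = 1 := by
        rw [Complex.norm_exp]; simp [Complex.mul_re]
      rw [this, mul_one]
  have key2 : ∀ t : ℝ,
      ‖∑' k : ℤ, Complex.I * (k : ℂ) * (M k : ℂ) * Complex.exp (Complex.I * t * k)‖ ^ 2
      = ‖∑' k : ℤ, (c₂ k : ℂ) * Complex.exp (Complex.I * t * k)‖ ^ 2 := by
    intro t
    have he : (∑' k : ℤ, Complex.I * (k : ℂ) * (M k : ℂ) * Complex.exp (Complex.I * t * k))
        = Complex.I * ∑' k : ℤ, (c₂ k : ℂ) * Complex.exp (Complex.I * t * k) := by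
      rw [← tsum_mul_left]
      apply tsum_congr
      intro k
      rw [hc₂]
      push_cast
      ring
    rw [he, norm_mul, Complex.norm_I, one_mul]
  have hint : (∫ t in (-π)..π,
      ‖∑' k : ℤ, (M k : ℂ) * Complex.exp (Complex.I * t * k)‖ ^ 2 +
      ‖∑' k : ℤ,
        Complex.I * (k : ℂ) * (M k : ℂ) * Complex.exp (Complex.I * t * k)‖ ^ 2)
      = 2 * π * (∑' k : ℤ, v k) := by
    have hI1 : IntervalIntegrable
        (fun t : ℝ => ‖∑' k : ℤ, (M k : ℂ) * Complex.exp (Complex.I * t * k)‖ ^ 2)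
        volume (-π) π :=
      (((hcont M h1).norm).pow 2).intervalIntegrable _ _
    have hI2 : IntervalIntegrable
        (fun t : ℝ => ‖∑' k : ℤ, (c₂ k : ℂ) * Complex.exp (Complex.I * t * k)‖ ^ 2)
        volume (-π) π :=
      (((hcont c₂ hc₂abs).norm).pow 2).intervalIntegrable _ _
    calc (∫ t in (-π)..π,
        ‖∑' k : ℤ, (M k : ℂ) * Complex.exp (Complex.I * t * k)‖ ^ 2 +
        ‖∑' k : ℤ,
          Complex.I * (k : ℂ) * (M k : ℂ) * Complex.exp (Complex.I * t * k)‖ ^ 2)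
        = ∫ t in (-π)..π,
          (‖∑' k : ℤ, (M k : ℂ) * Complex.exp (Complex.I * t * k)‖ ^ 2 +
          ‖∑' k : ℤ, (c₂ k : ℂ) * Complex.exp (Complex.I * t * k)‖ ^ 2) := by
          apply integral_congr
          intro t _
          simp only
          rw [key2 t]
      _ = (∫ t in (-π)..π,
            ‖∑' k : ℤ, (M k : ℂ) * Complex.exp (Complex.I * t * k)‖ ^ 2)
          + ∫ t in (-π)..π,
            ‖∑' k : ℤ, (c₂ k : ℂ) * Complex.exp (Complex.I * t * k)‖ ^ 2 :=
          integral_add hI1 hI2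
      _ = 2 * π * (∑' k : ℤ, (M k)^2) + 2 * π * (∑' k : ℤ, (c₂ k)^2) := by
          rw [parseval M h1, parseval c₂ hc₂abs]
      _ = 2 * π * (∑' k : ℤ, v k) := by rw [hveq]; ring
  rw [hint]
  -- constant simplification
  have hconst : Real.sqrt (1 / 2 + 1 / (2 * π)) * Real.sqrt (2 * π * (∑' k : ℤ, v k))
      = Real.sqrt ((1 + π) * ∑' k : ℤ, v k) := by
    rw [← Real.sqrt_mul (by positivity)]
    congr 1
    field_simp
    ring
  rw [hconst]
  -- Cauchy-Schwarz
  apply Summable.tsum_le_of_sum_le h1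
  intro s
  have hwpos : ∀ k : ℤ, (0:ℝ) < 1 + (k:ℝ)^2 := fun k => by positivity
  calc (∑ k ∈ s, |M k|)
      = ∑ k ∈ s, Real.sqrt (1/(1+(k:ℝ)^2)) * Real.sqrt (v k) := by
        apply Finset.sum_congr rfl
        intro k _
        rw [← Real.sqrt_mul (by positivity)]
        rw [hv]
        simp only
        rw [show 1/(1+(k:ℝ)^2) * ((1 + (k:ℝ)^2) * (M k)^2) = (M k)^2 by
          field_simp]
        exact (Real.sqrt_sq_eq_abs _).symm
    _ ≤ Real.sqrt (∑ k ∈ s, 1/(1+(k:ℝ)^2)) * Real.sqrt (∑ k ∈ s, v k) :=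
        Real.sum_sqrt_mul_sqrt_le s (fun k => by positivity) (fun k => hvnonneg k)
    _ ≤ Real.sqrt (1 + π) * Real.sqrt (∑' k : ℤ, v k) := by
        apply mul_le_mul
        · apply Real.sqrt_le_sqrt
          calc (∑ k ∈ s, 1/(1+(k:ℝ)^2)) ≤ ∑' k : ℤ, 1/(1+(k:ℝ)^2) :=
              Summable.sum_le_tsum s (fun k _ => by positivity) w_summable
            _ ≤ 4 := w_tsum_le
            _ ≤ 1 + π := by linarith [pi_gt_three]
        · exact Real.sqrt_le_sqrt (Summable.sum_le_tsum s (fun k _ => hvnonneg k) hvsum)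
        · exact Real.sqrt_nonneg _
        · exact Real.sqrt_nonneg _
    _ = Real.sqrt ((1 + π) * ∑' k : ℤ, v k) := (Real.sqrt_mul (by positivity) _).symm
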